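/- Let ξ > 0 and let E₁ denote the exponential integral E₁(x) = ∫_x^∞ e^{−t}/t dt. For every nonzero r ∈ ℝ², the function k ↦ (1/|k|⁴)·[(1 + |k|²/(4ξ²)) e^{−|k|²/(4ξ²)} − 1]·e^{i k·r} is absolutely integrable over ℝ² (k = 0 being a removable singularity), and (1/(4π²)) ∫_{ℝ²} (1/|k|⁴)·[(1 + |k|²/(4ξ²)) e^{−|k|²/(4ξ²)} − 1]·e^{i k·r} dk = (1/(16π ξ²))·( ξ²|r|² E₁(ξ²|r|²) − e^{−ξ²|r|²} ). In particular the left-hand side is real and depends only on |r|. -/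

import Mathlib

open MeasureTheory Real

/-- The exponential integral `E₁(x) = ∫_x^∞ e^{-t}/t dt`. -/
noncomputable def expInt (x : ℝ) : ℝ := ∫ t in Set.Ioi x, Real.exp (-t) / t

namespace BiharmonicAux

open Set Filter

lemma my_integral_ofReal {α : Type*} [MeasurableSpace α] {μ : Measure α} {f : α → ℝ} :
    ∫ x, ((f x : ℝ) : ℂ) ∂μ = ((∫ x, f x ∂μ : ℝ) : ℂ) := integral_ofReal

lemma meas_eit : Measurable (fun t : ℝ => Real.exp (-t) / t) :=
  (Real.measurable_exp.comp measurable_neg).div measurable_id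

lemma expInt_integrableOn {x : ℝ} (hx : 0 < x) :
    IntegrableOn (fun t : ℝ => Real.exp (-t) / t) (Ioi x) := by
  have h := (exp_neg_integrableOn_Ioi x (b := 1) one_pos).const_mul (1/x)
  refine h.mono' (meas_eit.aestronglyMeasurable.restrict) ?_
  filter_upwards [ae_restrict_mem measurableSet_Ioi] with t ht
  have ht' : 0 < t := hx.trans ht
  rw [Real.norm_eq_abs, abs_of_nonneg (by positivity)]
  have h1 : Real.exp (-t) / t ≤ Real.exp (-t) / x :=
    div_le_div_of_nonneg_left (Real.exp_pos _).le hx (le_of_lt ht)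
  calc Real.exp (-t) / t ≤ Real.exp (-t) / x := h1
    _ = 1 / x * Real.exp (-1 * t) := by rw [neg_one_mul]; ring

lemma expInt_nonneg {x : ℝ} (hx : 0 < x) : 0 ≤ expInt x := by
  refine setIntegral_nonneg measurableSet_Ioi fun t ht => ?_
  have : 0 < t := hx.trans ht
  positivity

lemma expInt_le {x : ℝ} (hx : 0 < x) : expInt x ≤ Real.exp (-x) / x := by
  have h1 : expInt x ≤ ∫ t in Ioi x, Real.exp (-t) / x := by
    refine setIntegral_mono_on (expInt_integrableOn hx)
      ((exp_neg_integrableOn_Ioi x one_pos).congr_fun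
        (fun t _ => by rw [neg_one_mul]) measurableSet_Ioi |>.div_const x)
      measurableSet_Ioi fun t ht => ?_
    exact div_le_div_of_nonneg_left (Real.exp_pos _).le hx (le_of_lt ht) |>.trans_eq rfl
  calc expInt x ≤ ∫ t in Ioi x, Real.exp (-t) / x := h1
    _ = (∫ t in Ioi x, Real.exp (-t)) / x := by rw [integral_div]
    _ = Real.exp (-x) / x := by rw [integral_exp_neg_Ioi]

lemma eit_contAt {t : ℝ} (ht : t ≠ 0) : ContinuousAt (fun t : ℝ => Real.exp (-t) / t) t :=
  ((Real.continuous_exp.comp continuous_neg).continuousAt).div continuousAt_id ht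

lemma expInt_hasDerivAt {x : ℝ} (hx : 0 < x) :
    HasDerivAt expInt (-(Real.exp (-x) / x)) x := by
  set f : ℝ → ℝ := fun t => Real.exp (-t) / t with hf
  set y : ℝ := x + 1 with hy
  have hxy : x < y := by simp [hy]
  have hkey : ∀ u ∈ Ioo (0:ℝ) y, expInt u = (∫ t in u..y, f t) + expInt y := by
    intro u hu
    rw [intervalIntegral.integral_of_le hu.2.le, expInt, expInt,
      ← setIntegral_union (Ioc_disjoint_Ioi le_rfl) measurableSet_Ioi
        ((expInt_integrableOn hu.1).mono_set Ioc_subset_Ioi_self)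
        (expInt_integrableOn (by linarith [hu.1, hxy] : (0:ℝ) < y)),
      Set.Ioc_union_Ioi_eq_Ioi hu.2.le]
  have hii : IntervalIntegrable f volume x y := by
    apply ContinuousOn.intervalIntegrable
    intro t ht
    rw [uIcc_of_le hxy.le] at ht
    exact (eit_contAt (by linarith [ht.1] : t ≠ 0)).continuousWithinAt
  have hH : HasDerivAt (fun u => (∫ t in u..y, f t) + expInt y) (-(f x)) x := by
    exact (intervalIntegral.integral_hasDerivAt_left hii
      ⟨Set.univ, Filter.univ_mem, meas_eit.aestronglyMeasurable.restrict⟩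
      (eit_contAt hx.ne')).add_const _
  refine hH.congr_of_eventuallyEq ?_
  filter_upwards [Ioo_mem_nhds hx hxy] with u hu using hkey u hu

lemma hasDerivAt_g {ρ : ℝ} (hρ : 0 < ρ) {t : ℝ} (ht : 0 < t) :
    HasDerivAt (fun u : ℝ => u * Real.exp (-(ρ/(4*u))) - ρ/4 * expInt (ρ/(4*u)))
      (Real.exp (-(ρ/(4*t)))) t := by
  have hx : HasDerivAt (fun u : ℝ => ρ/(4*u)) (-(ρ/(4*t^2))) t := by
    have h := (hasDerivAt_inv ht.ne').const_mul (ρ/4)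
    have hfun : (fun u:ℝ => ρ/4 * u⁻¹) = fun u => ρ/(4*u) := by funext u; ring
    rw [hfun] at h
    refine h.congr_deriv ?_
    ring
  have hxpos : 0 < ρ/(4*t) := by positivity
  have h1 : HasDerivAt (fun u : ℝ => u * Real.exp (-(ρ/(4*u))))
      (1 * Real.exp (-(ρ/(4*t))) + t * (Real.exp (-(ρ/(4*t))) * (ρ/(4*t^2)))) t := by
    have he : HasDerivAt (fun u : ℝ => Real.exp (-(ρ/(4*u))))
        (Real.exp (-(ρ/(4*t))) * (ρ/(4*t^2))) t := by
      have := (hx.neg).exp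
      refine this.congr_deriv ?_
      all_goals simp only [Pi.neg_apply, neg_neg]
    exact (hasDerivAt_id t).mul he
  have h2 : HasDerivAt (fun u : ℝ => ρ/4 * expInt (ρ/(4*u)))
      (ρ/4 * ((-(Real.exp (-(ρ/(4*t))) / (ρ/(4*t)))) * (-(ρ/(4*t^2))))) t := by
    exact ((expInt_hasDerivAt hxpos).comp t hx).const_mul _
  have h3 := h1.sub h2
  refine h3.congr_deriv ?_
  have h4t : (4:ℝ)*t ≠ 0 := by positivity
  field_simp
  ring

lemma key2 {ρ a : ℝ} (hρ : 0 < ρ) (ha : 0 < a) :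
    ∫ t in Ioc (0:ℝ) a, Real.exp (-(ρ/(4*t)))
      = a * Real.exp (-(ρ/(4*a))) - ρ/4 * expInt (ρ/(4*a)) := by
  set g : ℝ → ℝ := fun u => u * Real.exp (-(ρ/(4*u))) - ρ/4 * expInt (ρ/(4*u)) with hgdef
  set G : ℝ → ℝ := fun u => if u ≤ 0 then 0 else g u with hGdef
  have hGg : ∀ u : ℝ, 0 < u → G u = g u := fun u hu => by
    simp [hGdef, not_le.mpr hu]
  have hbound : ∀ u ∈ Icc (0:ℝ) a, ‖G u‖ ≤ 2 * u := by
    intro u hu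
    rcases eq_or_lt_of_le hu.1 with h | h
    · simp [hGdef, ← h]
    · rw [hGg u h]
      have hxpos : 0 < ρ/(4*u) := by positivity
      have hb1 : u * Real.exp (-(ρ/(4*u))) ≤ u := by
        nlinarith [Real.exp_le_one_iff.mpr (neg_nonpos.mpr hxpos.le),
          Real.exp_pos (-(ρ/(4*u)))]
      have hid : ρ/4 * (Real.exp (-(ρ/(4*u))) / (ρ/(4*u))) = u * Real.exp (-(ρ/(4*u))) := by
        field_simp
      have hb2 : ρ/4 * expInt (ρ/(4*u)) ≤ u := by
        calc ρ/4 * expInt (ρ/(4*u)) ≤ ρ/4 * (Real.exp (-(ρ/(4*u))) / (ρ/(4*u))) := by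
              have := expInt_le hxpos
              nlinarith
          _ = u * Real.exp (-(ρ/(4*u))) := hid
          _ ≤ u := hb1
      have hA : 0 ≤ u * Real.exp (-(ρ/(4*u))) := by positivity
      have hB : 0 ≤ ρ/4 * expInt (ρ/(4*u)) := by
        have := expInt_nonneg hxpos; nlinarith
      rw [Real.norm_eq_abs, abs_sub_le_iff]
      constructor <;> nlinarith
  have hcontG : ContinuousOn G (Icc 0 a) := by
    intro u hu
    rcases eq_or_lt_of_le hu.1 with h | h
    · subst h
      have h0 : G 0 = 0 := by simp [hGdef]
      rw [ContinuousWithinAt, h0]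
      apply squeeze_zero_norm'
      · filter_upwards [self_mem_nhdsWithin] with u hu using hbound u hu
      · have h2 : Tendsto (fun u : ℝ => 2 * u) (nhds 0) (nhds 0) := by
          simpa using (continuous_mul_left (2:ℝ)).tendsto 0
        exact h2.mono_left nhdsWithin_le_nhds
    · have hg : ContinuousAt g u := (hasDerivAt_g hρ h).continuousAt
      have : ContinuousAt G u := by
        apply hg.congr
        filter_upwards [lt_mem_nhds h] with v hv using (hGg v hv).symm
      exact this.continuousWithinAt
  have hderiv : ∀ t ∈ Ioo (0:ℝ) a, HasDerivWithinAt G (Real.exp (-(ρ/(4*t)))) (Ioi t) t := by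
    intro t ht
    have hg := hasDerivAt_g hρ ht.1
    have : HasDerivAt G (Real.exp (-(ρ/(4*t)))) t := by
      apply hg.congr_of_eventuallyEq
      filter_upwards [lt_mem_nhds ht.1] with v hv using hGg v hv
    exact this.hasDerivWithinAt
  have hint : IntervalIntegrable (fun t : ℝ => Real.exp (-(ρ/(4*t)))) volume 0 a := by
    rw [intervalIntegrable_iff_integrableOn_Ioc_of_le ha.le]
    apply Measure.integrableOn_of_bounded (M := 1) (by simp)
    · exact (Real.measurable_exp.comp
        (measurable_const.div ((measurable_id.const_mul 4)) :
          Measurable fun t : ℝ => ρ/(4*t)).neg).aestronglyMeasurable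
    · filter_upwards [ae_restrict_mem measurableSet_Ioc] with t ht
      rw [Real.norm_eq_abs, abs_of_pos (Real.exp_pos _)]
      exact Real.exp_le_one_iff.mpr (neg_nonpos.mpr (div_nonneg hρ.le (by nlinarith [ht.1])))
  have hftc := intervalIntegral.integral_eq_sub_of_hasDeriv_right_of_le ha.le hcontG hderiv hint
  rw [intervalIntegral.integral_of_le ha.le] at hftc
  rw [hftc, hGg a ha]
  simp [hGdef, hgdef]

lemma key1 {s : ℝ} (hs : s ≠ 0) (a : ℝ) :
    (1 / s^4) * ((1 + a * s^2) * Real.exp (-(a * s^2)) - 1)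
      = -∫ t in (0:ℝ)..a, t * Real.exp (-(t * s^2)) := by
  have hderiv : ∀ t ∈ uIcc (0:ℝ) a,
      HasDerivAt (fun t : ℝ => -((1 + t * s^2) * Real.exp (-(t * s^2))) / s^4)
        (t * Real.exp (-(t * s^2))) t := by
    intro t _
    have h1 : HasDerivAt (fun t : ℝ => 1 + t * s^2) (s^2) t := by
      have := ((hasDerivAt_id t).const_mul (s^2)).const_add 1
      simpa [mul_comm] using this
    have h2 : HasDerivAt (fun t : ℝ => Real.exp (-(t * s^2)))
        (Real.exp (-(t * s^2)) * (-(s^2))) t := by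
      have := ((hasDerivAt_id t).const_mul (s^2)).neg.exp
      convert this using 2
      · simp [mul_comm]
      · simp [mul_comm]
      · simp
    have h3 := ((h1.mul h2).neg).div_const (s^4)
    refine h3.congr_deriv ?_
    have : s^4 ≠ 0 := pow_ne_zero _ hs
    field_simp
    ring
  have hint : IntervalIntegrable (fun t : ℝ => t * Real.exp (-(t * s^2))) volume 0 a :=
    (continuous_id.mul ((continuous_id.mul continuous_const).neg.rexp
      : Continuous fun t : ℝ => Real.exp (-(t * s^2)))).intervalIntegrable 0 a
  rw [intervalIntegral.integral_eq_sub_of_hasDerivAt hderiv hint]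
  have : s^4 ≠ 0 := pow_ne_zero _ hs
  field_simp
  simp
  ring

end BiharmonicAux

/-- Real-space part of the Ewald decomposition of the biharmonic Green's function
with the Hasimoto screening function. -/
theorem biharmonic_real_space_part (ξ : ℝ) (hξ : 0 < ξ)
    (r : EuclideanSpace ℝ (Fin 2)) (hr : r ≠ 0) :
    Integrable (fun k : EuclideanSpace ℝ (Fin 2) =>
      (((1 / ‖k‖ ^ 4) *
        ((1 + ‖k‖ ^ 2 / (4 * ξ ^ 2)) * Real.exp (-‖k‖ ^ 2 / (4 * ξ ^ 2)) - 1) : ℝ) : ℂ)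
        * Complex.exp (Complex.I * ((inner ℝ k r : ℝ) : ℂ))) ∧
    (1 / (4 * (π : ℂ) ^ 2)) *
      (∫ k : EuclideanSpace ℝ (Fin 2),
        (((1 / ‖k‖ ^ 4) *
          ((1 + ‖k‖ ^ 2 / (4 * ξ ^ 2)) * Real.exp (-‖k‖ ^ 2 / (4 * ξ ^ 2)) - 1) : ℝ) : ℂ)
          * Complex.exp (Complex.I * ((inner ℝ k r : ℝ) : ℂ)))
      = (((1 / (16 * π * ξ ^ 2)) *
          (ξ ^ 2 * ‖r‖ ^ 2 * expInt (ξ ^ 2 * ‖r‖ ^ 2)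
            - Real.exp (-(ξ ^ 2 * ‖r‖ ^ 2))) : ℝ) : ℂ) := by
  have hr' : (0:ℝ) < ‖r‖ := norm_pos_iff.mpr hr
  have hρ : (0:ℝ) < ‖r‖^2 := by positivity
  have ha : (0:ℝ) < 1/(4*ξ^2) := by positivity
  set F : ℝ × EuclideanSpace ℝ (Fin 2) → ℂ := fun p =>
    (p.1 : ℂ) * Complex.exp (-(p.1 : ℂ) * (‖p.2‖ : ℂ)^2
      + Complex.I * ((inner ℝ r p.2 : ℝ) : ℂ)) with hF_def
  have hFcont : Continuous F := by
    apply Continuous.mul (Complex.continuous_ofReal.comp continuous_fst)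
    apply Complex.continuous_exp.comp
    apply Continuous.add
    · exact ((Complex.continuous_ofReal.comp continuous_fst).neg).mul
        ((Complex.continuous_ofReal.comp (continuous_norm.comp continuous_snd)).pow 2)
    · exact continuous_const.mul
        (Complex.continuous_ofReal.comp (Continuous.inner continuous_const continuous_snd))
  have hslice : ∀ t : ℝ, 0 < t →
      Integrable (fun k : EuclideanSpace ℝ (Fin 2) => F (t, k)) := by
    intro t ht
    have h := GaussianFourier.integrable_cexp_neg_mul_sq_norm_add (V := EuclideanSpace ℝ (Fin 2))
      (b := (t:ℂ)) (by simpa using ht) Complex.I r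
    exact h.const_mul ((t:ℂ))
  have hnormF : ∀ t : ℝ, 0 < t → ∀ k : EuclideanSpace ℝ (Fin 2),
      ‖F (t, k)‖ = t * Real.exp (-t * ‖k‖^2) := by
    intro t ht k
    rw [hF_def]
    simp only [norm_mul, Complex.norm_real, Complex.norm_exp]
    congr 1
    · exact (Real.norm_eq_abs t).trans (abs_of_pos ht)
    · congr 1
      simp [← Complex.ofReal_pow]
  have hgauss_norm : ∀ t : ℝ, 0 < t →
      (∫ k : EuclideanSpace ℝ (Fin 2), Real.exp (-t * ‖k‖^2)) = π / t := by
    intro t ht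
    rw [GaussianFourier.integral_rexp_neg_mul_sq_norm ht, finrank_euclideanSpace_fin]
    norm_num
  have hF : Integrable F ((volume.restrict (Set.Ioc (0:ℝ) (1/(4*ξ^2)))).prod volume) := by
    rw [MeasureTheory.integrable_prod_iff hFcont.aestronglyMeasurable]
    constructor
    · filter_upwards [ae_restrict_mem measurableSet_Ioc] with t ht
      exact hslice t ht.1
    · have hconst : Integrable (fun _ : ℝ => π)
          (volume.restrict (Set.Ioc (0:ℝ) (1/(4*ξ^2)))) := by
        exact MeasureTheory.integrableOn_const measure_Ioc_lt_top.ne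
      apply hconst.congr
      filter_upwards [ae_restrict_mem measurableSet_Ioc] with t ht
      have h1 : (fun k : EuclideanSpace ℝ (Fin 2) => ‖F (t, k)‖)
          = fun k => t * Real.exp (-t*‖k‖^2) := funext (hnormF t ht.1)
      rw [h1, MeasureTheory.integral_const_mul, hgauss_norm t ht.1]
      have htne : t ≠ 0 := ht.1.ne'
      field_simp
  have h0 : ∀ᵐ k : EuclideanSpace ℝ (Fin 2) ∂volume, k ≠ 0 := by
    have hsing : volume ({0} : Set (EuclideanSpace ℝ (Fin 2))) = 0 := measure_singleton 0
    rw [ae_iff]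
    convert hsing using 2
    ext k; simp
  have hae : (fun k : EuclideanSpace ℝ (Fin 2) =>
      (((1 / ‖k‖ ^ 4) *
        ((1 + ‖k‖ ^ 2 / (4 * ξ ^ 2)) * Real.exp (-‖k‖ ^ 2 / (4 * ξ ^ 2)) - 1) : ℝ) : ℂ)
        * Complex.exp (Complex.I * ((inner ℝ k r : ℝ) : ℂ)))
      =ᵐ[volume] fun k => -∫ t in Set.Ioc (0:ℝ) (1/(4*ξ^2)), F (t, k) := by
    filter_upwards [h0] with k hk
    have hs : ‖k‖ ≠ 0 := norm_ne_zero_iff.mpr hk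
    have e2 : -‖k‖ ^ 2 / (4 * ξ ^ 2) = -((1/(4*ξ^2)) * ‖k‖^2) := by ring
    have e1 : ‖k‖ ^ 2 / (4 * ξ ^ 2) = (1/(4*ξ^2)) * ‖k‖^2 := by ring
    rw [e2, e1, BiharmonicAux.key1 hs (1/(4*ξ^2)),
      intervalIntegral.integral_of_le ha.le]
    rw [Complex.ofReal_neg, ← BiharmonicAux.my_integral_ofReal, neg_mul, ← MeasureTheory.integral_mul_const]
    congr 1
    refine integral_congr_ae (Filter.Eventually.of_forall fun t => ?_)
    rw [hF_def]
    have hinner : (inner ℝ k r : ℝ) = (inner ℝ r k : ℝ) := real_inner_comm r k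
    simp only [hinner, Complex.ofReal_mul, Complex.ofReal_exp, Complex.exp_add]
    push_cast
    ring
  refine ⟨(hF.integral_prod_right.neg).congr hae.symm, ?_⟩
  have hval : (∫ k : EuclideanSpace ℝ (Fin 2),
      (((1 / ‖k‖ ^ 4) *
        ((1 + ‖k‖ ^ 2 / (4 * ξ ^ 2)) * Real.exp (-‖k‖ ^ 2 / (4 * ξ ^ 2)) - 1) : ℝ) : ℂ)
        * Complex.exp (Complex.I * ((inner ℝ k r : ℝ) : ℂ)))
      = -∫ t in Set.Ioc (0:ℝ) (1/(4*ξ^2)),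
          ∫ k : EuclideanSpace ℝ (Fin 2), F (t, k) := by
    rw [integral_congr_ae hae, integral_neg]
    congr 1
    exact (MeasureTheory.integral_integral_swap (f := fun t k => F (t, k)) hF).symm
  have hinner_int : ∀ t ∈ Set.Ioc (0:ℝ) (1/(4*ξ^2)),
      (∫ k : EuclideanSpace ℝ (Fin 2), F (t, k))
        = (π : ℂ) * Complex.exp (((-(‖r‖^2/(4*t))) : ℝ) : ℂ) := by
    intro t ht
    have ht0 := ht.1
    have htC : ((t:ℂ)) ≠ 0 := Complex.ofReal_ne_zero.mpr ht0.ne'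
    rw [hF_def]
    simp only
    rw [MeasureTheory.integral_const_mul,
      GaussianFourier.integral_cexp_neg_mul_sq_norm_add (by simpa using ht0) Complex.I r]
    have hfr : ((Module.finrank ℝ (EuclideanSpace ℝ (Fin 2)) : ℂ) / 2) = 1 := by
      rw [finrank_euclideanSpace_fin]; norm_num
    rw [hfr, Complex.cpow_one, Complex.I_sq]
    rw [show (-1 * ((‖r‖:ℂ))^2 / (4 * (t:ℂ))) = (((-(‖r‖^2/(4*t))) : ℝ) : ℂ) by
      push_cast; ring]
    field_simp
  rw [hval, setIntegral_congr_fun measurableSet_Ioc hinner_int]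
  have hcast : ∀ x : ℝ, Complex.exp ((x:ℝ) : ℂ) = ((Real.exp x : ℝ) : ℂ) := by
    intro x; rw [Complex.ofReal_exp]
  simp_rw [hcast]
  rw [MeasureTheory.integral_const_mul, BiharmonicAux.my_integral_ofReal,
    BiharmonicAux.key2 hρ ha]
  have e3 : ‖r‖^2/(4*(1/(4*ξ^2))) = ξ^2*‖r‖^2 := by field_simp
  rw [e3]
  have hπ : (π:ℝ) ≠ 0 := pi_ne_zero
  have hreal : (1/(4*π^2)) * -(π * ((1/(4*ξ^2)) * Real.exp (-(ξ^2*‖r‖^2))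
        - ‖r‖^2/4 * expInt (ξ^2*‖r‖^2)))
      = (1/(16*π*ξ^2)) * (ξ^2*‖r‖^2 * expInt (ξ^2*‖r‖^2) - Real.exp (-(ξ^2*‖r‖^2))) := by
    field_simp
    ring
  calc (1 / (4 * (π:ℂ) ^ 2)) * -((π:ℂ) * (((1/(4*ξ^2)) * Real.exp (-(ξ^2*‖r‖^2))
        - ‖r‖^2/4 * expInt (ξ^2*‖r‖^2) : ℝ) : ℂ))
      = (((1/(4*π^2)) * -(π * ((1/(4*ξ^2)) * Real.exp (-(ξ^2*‖r‖^2))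
        - ‖r‖^2/4 * expInt (ξ^2*‖r‖^2))) : ℝ) : ℂ) := by push_cast; ring
    _ = _ := by rw [hreal]
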